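/- arXiv:1403.1751 — 4 statements merged into one kernel-verified Lean document; each statement's English description precedes it below -/
import Mathlib

section
/- Let E be a finite nonempty set and Q : E × E → ℝ an intensity matrix, i.e. Q(y₁,y₂) ≥ 0 whenever y₁ ≠ y₂ and Σ_{y₂∈E} Q(y₁,y₂) = 0 for every y₁ ∈ E. Assume μ : E → ℝ is a probability vector (μ(y) ≥ 0 for all y and Σ_{y∈E} μ(y) = 1) satisfying Σ_{y₁∈E} μ(y₁)·Q(y₁,y₂) = 0 for all y₂ ∈ E, and that μ is the unique probability vector with this property. Then for every g : E → ℝ with Σ_{y∈E} μ(y)·g(y) = 0 there exists a unique f : E → ℝ such that Σ_{y₂∈E} Q(y₁,y₂)·f(y₂) = g(y₁) for all y₁ ∈ E and Σ_{y∈E} μ(y)·f(y) = 0. -/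
open Finset Matrix

section Aux
variable {E : Type*} [Fintype E] [Nonempty E]

/-- A nonnegative stationary vector is a multiple of the unique stationary probability vector. -/
lemma aux_nonneg_stat {Q : E → E → ℝ} {μ : E → ℝ}
    (hμuniq : ∀ μ' : E → ℝ, (∀ y, 0 ≤ μ' y) → (∑ y, μ' y = 1) →
      (∀ y₂, ∑ y₁, μ' y₁ * Q y₁ y₂ = 0) → μ' = μ)
    (w : E → ℝ) (hw : ∀ y, 0 ≤ w y) (hstat : ∀ y₂, ∑ y₁, w y₁ * Q y₁ y₂ = 0) :
    ∀ y, w y = (∑ y', w y') * μ y := by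
  by_cases hs : ∑ y, w y = 0
  · intro y
    have h0 : w y = 0 :=
      (Finset.sum_eq_zero_iff_of_nonneg (fun y _ => hw y)).mp hs y (mem_univ y)
    simp [h0, hs]
  · have hspos : 0 < ∑ y, w y :=
      lt_of_le_of_ne (Finset.sum_nonneg fun y _ => hw y) (Ne.symm hs)
    have key := hμuniq (fun y => w y / ∑ y', w y')
      (fun y => div_nonneg (hw y) hspos.le)
      (by rw [← Finset.sum_div]; field_simp)
      (by
        intro y₂
        have : ∑ y₁, w y₁ / (∑ y', w y') * Q y₁ y₂
            = (∑ y₁, w y₁ * Q y₁ y₂) / (∑ y', w y') := by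
          rw [Finset.sum_div]
          refine Finset.sum_congr rfl fun y₁ _ => by ring
        rw [this, hstat, zero_div])
    intro y
    have := congrFun key y
    field_simp at this
    linarith [this]

/-- Any stationary vector (not necessarily nonnegative) is a multiple of μ. -/
lemma aux_stat {Q : E → E → ℝ} {μ : E → ℝ}
    (hQoff : ∀ y₁ y₂, y₁ ≠ y₂ → 0 ≤ Q y₁ y₂)
    (hQrow : ∀ y₁, ∑ y₂, Q y₁ y₂ = 0)
    (hμuniq : ∀ μ' : E → ℝ, (∀ y, 0 ≤ μ' y) → (∑ y, μ' y = 1) →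
      (∀ y₂, ∑ y₁, μ' y₁ * Q y₁ y₂ = 0) → μ' = μ)
    (ν : E → ℝ) (hstat : ∀ y₂, ∑ y₁, ν y₁ * Q y₁ y₂ = 0) :
    ∀ y, ν y = (∑ y', ν y') * μ y := by
  classical
  -- diagonal entries are nonpositive
  have hdiag : ∀ y, Q y y ≤ 0 := by
    intro y
    have h1 : Q y y + ∑ y₂ ∈ univ.erase y, Q y y₂ = 0 := by
      rw [Finset.add_sum_erase univ _ (mem_univ y)]; exact hQrow y
    have h2 : 0 ≤ ∑ y₂ ∈ univ.erase y, Q y y₂ :=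
      Finset.sum_nonneg fun y₂ hy₂ => hQoff y y₂ (Ne.symm (Finset.ne_of_mem_erase hy₂))
    linarith
  set m : ℝ := ∑ y, -Q y y with hm
  have hmnn : 0 ≤ m := Finset.sum_nonneg fun y _ => by linarith [hdiag y]
  have hmle : ∀ y, -Q y y ≤ m :=
    fun y => Finset.single_le_sum (f := fun y => -Q y y)
      (fun y' _ => by simpa using neg_nonneg.mpr (hdiag y')) (mem_univ y)
  set h : ℝ := 1 / (1 + m) with hh
  have hhpos : 0 < h := by positivity
  set P : E → E → ℝ := fun y₁ y₂ => (if y₁ = y₂ then (1:ℝ) else 0) + h * Q y₁ y₂ with hP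
  have hPnn : ∀ y₁ y₂, 0 ≤ P y₁ y₂ := by
    intro y₁ y₂
    by_cases he : y₁ = y₂
    · subst he
      show (0:ℝ) ≤ (if y₁ = y₁ then (1:ℝ) else 0) + h * Q y₁ y₁
      rw [if_pos rfl]
      have h1 : h * (-Q y₁ y₁) ≤ h * m := by
        exact mul_le_mul_of_nonneg_left (hmle y₁) hhpos.le
      have h2 : h * m ≤ 1 := by
        rw [hh]; rw [div_mul_eq_mul_div, div_le_one (by linarith)]; linarith
      linarith
    · simp only [hP, if_neg he]
      have := hQoff y₁ y₂ he
      positivity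
  have hProw : ∀ y₁, ∑ y₂, P y₁ y₂ = 1 := by
    intro y₁
    simp only [hP]
    rw [Finset.sum_add_distrib, ← Finset.mul_sum, hQrow, mul_zero, add_zero,
      Finset.sum_ite_eq univ y₁ (fun _ => (1:ℝ)), if_pos (mem_univ y₁)]
  have hνP : ∀ y₂, ∑ y₁, ν y₁ * P y₁ y₂ = ν y₂ := by
    intro y₂
    simp only [hP, mul_add]
    rw [Finset.sum_add_distrib]
    have h1 : ∑ y₁, ν y₁ * (if y₁ = y₂ then (1:ℝ) else 0) = ν y₂ := by
      rw [Finset.sum_congr rfl (fun y₁ _ => mul_ite_zero ..)]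
      · exact Finset.sum_ite_eq' univ y₂ (fun y => ν y * 1) |>.trans (by simp)
    have h2 : ∑ y₁, ν y₁ * (h * Q y₁ y₂) = h * ∑ y₁, ν y₁ * Q y₁ y₂ := by
      rw [Finset.mul_sum]; exact Finset.sum_congr rfl fun y₁ _ => by ring
    rw [h1, h2, hstat, mul_zero, add_zero]
  set a : E → ℝ := fun y => |ν y| with ha
  have haineq : ∀ y₂, a y₂ ≤ ∑ y₁, a y₁ * P y₁ y₂ := by
    intro y₂
    calc a y₂ = |∑ y₁, ν y₁ * P y₁ y₂| := by rw [hνP y₂]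
      _ ≤ ∑ y₁, |ν y₁ * P y₁ y₂| := Finset.abs_sum_le_sum_abs _ _
      _ = ∑ y₁, a y₁ * P y₁ y₂ := by
          refine Finset.sum_congr rfl fun y₁ _ => ?_
          rw [abs_mul, abs_of_nonneg (hPnn y₁ y₂)]
  have hsumeq : ∑ y₂, (∑ y₁, a y₁ * P y₁ y₂ - a y₂) = 0 := by
    rw [Finset.sum_sub_distrib, Finset.sum_comm]
    have : ∀ y₁ : E, ∑ y₂, a y₁ * P y₁ y₂ = a y₁ := by
      intro y₁; rw [← Finset.mul_sum, hProw, mul_one]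
    rw [Finset.sum_congr rfl fun y₁ _ => this y₁, sub_self]
  have haP : ∀ y₂, ∑ y₁, a y₁ * P y₁ y₂ = a y₂ := by
    intro y₂
    have hz := (Finset.sum_eq_zero_iff_of_nonneg
      (fun y₂ _ => sub_nonneg.mpr (haineq y₂))).mp hsumeq y₂ (mem_univ y₂)
    linarith [sub_eq_zero.mp hz]
  have haQ : ∀ y₂, ∑ y₁, a y₁ * Q y₁ y₂ = 0 := by
    intro y₂
    have := haP y₂
    simp only [hP, mul_add] at this
    rw [Finset.sum_add_distrib] at this
    have h1 : ∑ y₁, a y₁ * (if y₁ = y₂ then (1:ℝ) else 0) = a y₂ := by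
      rw [Finset.sum_congr rfl (fun y₁ _ => mul_ite_zero ..)]
      exact Finset.sum_ite_eq' univ y₂ (fun y => a y * 1) |>.trans (by simp)
    have h2 : ∑ y₁, a y₁ * (h * Q y₁ y₂) = h * ∑ y₁, a y₁ * Q y₁ y₂ := by
      rw [Finset.mul_sum]; exact Finset.sum_congr rfl fun y₁ _ => by ring
    rw [h1, h2] at this
    have : h * ∑ y₁, a y₁ * Q y₁ y₂ = 0 := by linarith
    exact (mul_eq_zero.mp this).resolve_left (ne_of_gt hhpos)
  -- positive and negative parts
  set b : E → ℝ := fun y => (a y + ν y) / 2 with hb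
  set c : E → ℝ := fun y => (a y - ν y) / 2 with hc
  have hbnn : ∀ y, 0 ≤ b y := fun y => by
    have := abs_nonneg (ν y); have := neg_abs_le (ν y); simp only [hb, ha]; linarith
  have hcnn : ∀ y, 0 ≤ c y := fun y => by
    have := le_abs_self (ν y); simp only [hc, ha]; linarith
  have hbstat : ∀ y₂, ∑ y₁, b y₁ * Q y₁ y₂ = 0 := by
    intro y₂
    have : ∑ y₁, b y₁ * Q y₁ y₂
        = ((∑ y₁, a y₁ * Q y₁ y₂) + ∑ y₁, ν y₁ * Q y₁ y₂) / 2 := by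
      rw [← Finset.sum_add_distrib, Finset.sum_div]
      exact Finset.sum_congr rfl fun y₁ _ => by simp only [hb]; ring
    rw [this, haQ, hstat]; norm_num
  have hcstat : ∀ y₂, ∑ y₁, c y₁ * Q y₁ y₂ = 0 := by
    intro y₂
    have : ∑ y₁, c y₁ * Q y₁ y₂
        = ((∑ y₁, a y₁ * Q y₁ y₂) - ∑ y₁, ν y₁ * Q y₁ y₂) / 2 := by
      rw [← Finset.sum_sub_distrib, Finset.sum_div]
      exact Finset.sum_congr rfl fun y₁ _ => by simp only [hc]; ring
    rw [this, haQ, hstat]; norm_num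
  have hbm := aux_nonneg_stat hμuniq b hbnn hbstat
  have hcm := aux_nonneg_stat hμuniq c hcnn hcstat
  intro y
  have hby := hbm y
  have hcy := hcm y
  have hν : ν y = b y - c y := by simp only [hb, hc]; ring
  have hνsum : ∑ y', ν y' = (∑ y', b y') - (∑ y', c y') := by
    rw [← Finset.sum_sub_distrib]
    exact Finset.sum_congr rfl fun y' _ => by simp only [hb, hc]; ring
  rw [hν, hby, hcy, hνsum]; ring

end Aux

theorem poisson_equation_well_posed
    {E : Type*} [Fintype E] [Nonempty E]
    (Q : E → E → ℝ)
    (hQoff : ∀ y₁ y₂, y₁ ≠ y₂ → 0 ≤ Q y₁ y₂)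
    (hQrow : ∀ y₁, ∑ y₂, Q y₁ y₂ = 0)
    (μ : E → ℝ)
    (hμpos : ∀ y, 0 ≤ μ y)
    (hμsum : ∑ y, μ y = 1)
    (hμstat : ∀ y₂, ∑ y₁, μ y₁ * Q y₁ y₂ = 0)
    (hμuniq : ∀ μ' : E → ℝ, (∀ y, 0 ≤ μ' y) → (∑ y, μ' y = 1) →
      (∀ y₂, ∑ y₁, μ' y₁ * Q y₁ y₂ = 0) → μ' = μ) :
    ∀ g : E → ℝ, (∑ y, μ y * g y = 0) →
      ∃! f : E → ℝ, (∀ y₁, ∑ y₂, Q y₁ y₂ * f y₂ = g y₁) ∧ ∑ y, μ y * f y = 0 := by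
  classical
  set n := Fintype.card E with hn
  have hn1 : 1 ≤ n := Fintype.card_pos
  set M : Matrix E E ℝ := Matrix.of Q with hM
  -- the linear functional g ↦ ∑ μ y * g y
  set φ : (E → ℝ) →ₗ[ℝ] ℝ :=
    { toFun := fun g => ∑ y, μ y * g y
      map_add' := by
        intro x y; simp [mul_add, Finset.sum_add_distrib]
      map_smul' := by
        intro c x
        simp only [Pi.smul_apply, smul_eq_mul, RingHom.id_apply, Finset.mul_sum]
        exact Finset.sum_congr rfl fun y _ => by ring } with hφ
  have hφapp : ∀ g, φ g = ∑ y, μ y * g y := fun g => rfl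
  have hμne : μ ≠ 0 := by
    intro h; rw [h] at hμsum; simp at hμsum
  -- left kernel = span μ
  have hK : LinearMap.ker (Matrix.mulVecLin Mᵀ) = Submodule.span ℝ {μ} := by
    apply le_antisymm
    · intro ν hν
      have hν' : ∀ y₂, ∑ y₁, ν y₁ * Q y₁ y₂ = 0 := by
        intro y₂
        have := congrFun (LinearMap.mem_ker.mp hν) y₂
        simp only [Matrix.mulVecLin_apply, Matrix.mulVec, dotProduct,
          Matrix.transpose_apply, Pi.zero_apply, hM, Matrix.of_apply] at this
        rw [← this]
        exact Finset.sum_congr rfl fun y₁ _ => mul_comm _ _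
      have := aux_stat hQoff hQrow hμuniq ν hν'
      have : ν = (∑ y', ν y') • μ := funext fun y => by
        simpa [smul_eq_mul] using this y
      rw [this]
      exact Submodule.smul_mem _ _ (Submodule.mem_span_singleton_self μ)
    · rw [Submodule.span_le, Set.singleton_subset_iff]
      refine LinearMap.mem_ker.mpr (funext fun y₂ => ?_)
      simp only [Matrix.mulVecLin_apply, Matrix.mulVec, dotProduct,
        Matrix.transpose_apply, Pi.zero_apply, hM, Matrix.of_apply]
      rw [← hμstat y₂]
      exact Finset.sum_congr rfl fun y₁ _ => mul_comm _ _
  have hKrank : Module.finrank ℝ (LinearMap.ker (Matrix.mulVecLin Mᵀ)) = 1 := by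
    rw [hK]; exact finrank_span_singleton hμne
  have hdim : Module.finrank ℝ (E → ℝ) = n := by
    simp [hn]
  -- rank of M
  have hrankMt : Mᵀ.rank + 1 = n := by
    have := LinearMap.finrank_range_add_finrank_ker (Matrix.mulVecLin Mᵀ)
    rw [hKrank, hdim] at this
    exact this
  have hrankM : M.rank + 1 = n := by rw [← Matrix.rank_transpose]; exact hrankMt
  -- φ is surjective, ker φ has finrank n - 1
  have hφsurj : LinearMap.range φ = ⊤ := by
    rw [LinearMap.range_eq_top]
    intro c
    exact ⟨fun _ => c, by simp [hφapp, ← Finset.sum_mul, hμsum]⟩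
  have hWrank : Module.finrank ℝ (LinearMap.ker φ) + 1 = n := by
    have := LinearMap.finrank_range_add_finrank_ker φ
    rw [hφsurj, hdim] at this
    simpa [add_comm] using this
  -- range M.mulVecLin = ker φ
  have hle : LinearMap.range M.mulVecLin ≤ LinearMap.ker φ := by
    rintro _ ⟨f, rfl⟩
    refine LinearMap.mem_ker.mpr ?_
    rw [hφapp]
    have : ∑ y, μ y * (M.mulVecLin f) y
        = ∑ y₂, (∑ y₁, μ y₁ * Q y₁ y₂) * f y₂ := by
      simp only [Matrix.mulVecLin_apply, Matrix.mulVec, dotProduct, hM,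
        Matrix.of_apply, Finset.mul_sum, Finset.sum_mul]
      rw [Finset.sum_comm]
      exact Finset.sum_congr rfl fun y₂ _ => Finset.sum_congr rfl fun y₁ _ => by ring
    rw [this]
    rw [Finset.sum_congr rfl fun y₂ _ => by rw [hμstat y₂, zero_mul]]
    simp
  have hrange : LinearMap.range M.mulVecLin = LinearMap.ker φ := by
    apply Submodule.eq_of_le_of_finrank_le hle
    have : Module.finrank ℝ (LinearMap.range M.mulVecLin) = M.rank := rfl
    omega
  -- right kernel = span of constant 1
  have hone : (fun _ : E => (1:ℝ)) ∈ LinearMap.ker M.mulVecLin := by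
    refine LinearMap.mem_ker.mpr (funext fun y₁ => ?_)
    simp only [Matrix.mulVecLin_apply, Matrix.mulVec, dotProduct, hM,
      Matrix.of_apply, mul_one, Pi.zero_apply]
    exact hQrow y₁
  have honene : (fun _ : E => (1:ℝ)) ≠ 0 := by
    intro h
    have := congrFun h (Classical.arbitrary E)
    simp at this
  have hkerM : LinearMap.ker M.mulVecLin = Submodule.span ℝ {fun _ : E => (1:ℝ)} := by
    have hle2 : Submodule.span ℝ {fun _ : E => (1:ℝ)} ≤ LinearMap.ker M.mulVecLin := by
      rw [Submodule.span_le, Set.singleton_subset_iff]; exact hone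
    have hkr : Module.finrank ℝ (LinearMap.ker M.mulVecLin) = 1 := by
      have := LinearMap.finrank_range_add_finrank_ker M.mulVecLin
      rw [hdim] at this
      have hr : Module.finrank ℝ (LinearMap.range M.mulVecLin) = M.rank := rfl
      omega
    symm
    apply Submodule.eq_of_le_of_finrank_le hle2
    rw [hkr, finrank_span_singleton honene]
  -- main proof
  intro g hg
  have hgW : g ∈ LinearMap.ker φ := LinearMap.mem_ker.mpr (by rw [hφapp]; exact hg)
  rw [← hrange] at hgW
  obtain ⟨f₀, hf₀⟩ := hgW
  set cc := ∑ y, μ y * f₀ y with hcc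
  set f : E → ℝ := fun y => f₀ y - cc with hf
  have hfeq : ∀ y₁, ∑ y₂, Q y₁ y₂ * f y₂ = g y₁ := by
    intro y₁
    have h1 := congrFun hf₀ y₁
    simp only [Matrix.mulVecLin_apply, Matrix.mulVec, dotProduct, hM,
      Matrix.of_apply] at h1
    have : ∑ y₂, Q y₁ y₂ * f y₂
        = (∑ y₂, Q y₁ y₂ * f₀ y₂) - cc * ∑ y₂, Q y₁ y₂ := by
      rw [Finset.mul_sum, ← Finset.sum_sub_distrib]
      exact Finset.sum_congr rfl fun y₂ _ => by simp only [hf]; ring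
    rw [this, hQrow, h1, mul_zero, sub_zero]
  have hfcent : ∑ y, μ y * f y = 0 := by
    have : ∑ y, μ y * f y = (∑ y, μ y * f₀ y) - cc * ∑ y, μ y := by
      rw [Finset.mul_sum, ← Finset.sum_sub_distrib]
      exact Finset.sum_congr rfl fun y _ => by simp only [hf]; ring
    rw [this, hμsum, ← hcc, mul_one, sub_self]
  refine ⟨f, ⟨hfeq, hfcent⟩, ?_⟩
  rintro f' ⟨hf'eq, hf'cent⟩
  have hd : (f' - f) ∈ LinearMap.ker M.mulVecLin := by
    refine LinearMap.mem_ker.mpr (funext fun y₁ => ?_)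
    simp only [Matrix.mulVecLin_apply, Matrix.mulVec, dotProduct, hM,
      Matrix.of_apply, Pi.sub_apply, Pi.zero_apply]
    have : ∑ y₂, Q y₁ y₂ * (f' y₂ - f y₂)
        = (∑ y₂, Q y₁ y₂ * f' y₂) - ∑ y₂, Q y₁ y₂ * f y₂ := by
      rw [← Finset.sum_sub_distrib]
      exact Finset.sum_congr rfl fun y₂ _ => by ring
    rw [this, hf'eq y₁, hfeq y₁, sub_self]
  rw [hkerM, Submodule.mem_span_singleton] at hd
  obtain ⟨c, hc⟩ := hd
  have hcfun : ∀ y, f' y - f y = c := by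
    intro y
    have := congrFun hc y
    simpa [smul_eq_mul] using this.symm
  have hc0 : c = 0 := by
    have : ∑ y, μ y * (f' y - f y) = c := by
      rw [Finset.sum_congr rfl fun y _ => by rw [hcfun y]]
      rw [← Finset.sum_mul, hμsum, one_mul]
    rw [Finset.sum_congr rfl (fun y _ => by rw [mul_sub]), Finset.sum_sub_distrib,
      hf'cent, hfcent, sub_self] at this
    exact this.symm
  funext y
  have := hcfun y
  rw [hc0] at this
  linarith
end

section
/- Let H be a real Hilbert space, D ⊆ H a linear subspace, and A : D → H a linear map which is dissipative with constant a > 0, i.e. ⟨A x, x⟩ ≤ −a‖x‖² for all x ∈ D. Let T > 0 and let g : ℝ → H → H satisfy: (i) ⟨g(t)(x₁) − g(t)(x₂), x₁ − x₂⟩ ≤ d·‖x₁ − x₂‖² for all t ∈ [0,T] and x₁, x₂ ∈ H, and (ii) ‖g(t)(0)‖ ≤ f₀ for all t ∈ [0,T], where d ∈ ℝ and f₀ ≥ 0. If X : ℝ → H is a curve with X(t) ∈ D for all t ∈ [0,T] and X has derivative A(X(t)) + g(t)(X(t)) at every t ∈ [0,T], then for all t ∈ [0,T]: ‖X(t)‖²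 ≤ exp(|1 + 2d − 2a|·T)·(‖X(0)‖² + f₀²·T). -/
open RealInnerProductSpace Set

/-- Auxiliary: the Gronwall bound is dominated by `exp (K*T) * (δ + ε*T)` when `K, δ, ε ≥ 0`. -/
lemma gronwallBound_le_aux {δ K ε T t : ℝ} (hδ : 0 ≤ δ) (hK : 0 ≤ K) (hε : 0 ≤ ε)
    (ht : 0 ≤ t) (htT : t ≤ T) :
    gronwallBound δ K ε t ≤ Real.exp (K * T) * (δ + ε * T) := by
  have hT : (0:ℝ) ≤ T := le_trans ht htT
  rcases eq_or_lt_of_le hK with hK0 | hKpos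
  · rw [← hK0, gronwallBound_K0]
    simp only [← hK0, zero_mul, Real.exp_zero, one_mul]
    have : ε * t ≤ ε * T := by nlinarith
    linarith
  · have hKne : K ≠ 0 := ne_of_gt hKpos
    rw [gronwallBound_of_K_ne_0 hKne]
    have h1 : Real.exp (K * t) ≤ Real.exp (K * T) := by
      apply Real.exp_le_exp.2; nlinarith
    have h2 : Real.exp (K * t) - 1 ≤ K * t * Real.exp (K * t) := by
      have h3 : 1 - K * t ≤ Real.exp (-(K * t)) := by
        have := Real.add_one_le_exp (-(K * t)); linarith
      have h4 : (1 - K * t) * Real.exp (K * t) ≤ 1 := by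
        calc (1 - K * t) * Real.exp (K * t) ≤ Real.exp (-(K * t)) * Real.exp (K * t) := by
              apply mul_le_mul_of_nonneg_right h3 (Real.exp_pos _).le
          _ = 1 := by rw [← Real.exp_add]; simp
      nlinarith [Real.exp_pos (K * t)]
    have h5 : ε / K * (Real.exp (K * t) - 1) ≤ ε * (t * Real.exp (K * t)) := by
      rw [div_mul_eq_mul_div, div_le_iff₀ hKpos]
      nlinarith
    have h6 : ε * (t * Real.exp (K * t)) ≤ ε * (T * Real.exp (K * T)) := by
      apply mul_le_mul_of_nonneg_left _ hε
      have := (Real.exp_pos (K * t)).le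
      nlinarith [Real.exp_pos (K * T)]
    have h7 : δ * Real.exp (K * t) ≤ δ * Real.exp (K * T) :=
      mul_le_mul_of_nonneg_left h1 hδ
    calc δ * Real.exp (K * t) + ε / K * (Real.exp (K * t) - 1)
        ≤ δ * Real.exp (K * T) + ε * (T * Real.exp (K * T)) := by linarith
      _ = Real.exp (K * T) * (δ + ε * T) := by ring

theorem apriori_bound
    {H : Type*} [NormedAddCommGroup H] [InnerProductSpace ℝ H] [CompleteSpace H]
    (D : Submodule ℝ H) (A : D →ₗ[ℝ] H)
    (a : ℝ) (ha : 0 < a)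
    (hA : ∀ x : D, ⟪A x, (x : H)⟫ ≤ -a * ‖(x : H)‖ ^ 2)
    (T : ℝ) (hT : 0 < T)
    (g : ℝ → H → H) (d f₀ : ℝ) (hf₀ : 0 ≤ f₀)
    (hg : ∀ t ∈ Icc (0:ℝ) T, ∀ x₁ x₂ : H,
      ⟪g t x₁ - g t x₂, x₁ - x₂⟫ ≤ d * ‖x₁ - x₂‖ ^ 2)
    (hg0 : ∀ t ∈ Icc (0:ℝ) T, ‖g t 0‖ ≤ f₀)
    (X : ℝ → H)
    (hXD : ∀ t, ∀ _ : t ∈ Icc (0:ℝ) T, X t ∈ D)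
    (hXderiv : ∀ t, ∀ ht : t ∈ Icc (0:ℝ) T,
      HasDerivAt X (A ⟨X t, hXD t ht⟩ + g t (X t)) t) :
    ∀ t ∈ Icc (0:ℝ) T,
      ‖X t‖ ^ 2 ≤ Real.exp (|1 + 2 * d - 2 * a| * T) * (‖X 0‖ ^ 2 + f₀ ^ 2 * T) := by
  set K : ℝ := |1 + 2 * d - 2 * a| with hKdef
  have hK : 0 ≤ K := abs_nonneg _
  set φ : ℝ → ℝ := fun t => ‖X t‖ ^ 2 with hφdef
  -- the candidate derivative of φ
  set φ' : ℝ → ℝ := fun t =>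
    if ht : t ∈ Icc (0:ℝ) T then 2 * ⟪A ⟨X t, hXD t ht⟩ + g t (X t), X t⟫ else 0 with hφ'def
  have hφderiv : ∀ t ∈ Icc (0:ℝ) T, HasDerivAt φ (φ' t) t := by
    intro t ht
    have hX := hXderiv t ht
    have h1 : HasDerivAt (fun s => ⟪X s, X s⟫)
        (⟪X t, A ⟨X t, hXD t ht⟩ + g t (X t)⟫ + ⟪A ⟨X t, hXD t ht⟩ + g t (X t), X t⟫) t :=
      HasDerivAt.inner ℝ hX hX
    have h2 : φ = fun s => ⟪X s, X s⟫ := by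
      funext s; simp [hφdef, real_inner_self_eq_norm_sq]
    rw [h2]
    convert h1 using 1
    rw [hφ'def]; simp only [dif_pos ht]
    rw [real_inner_comm (X t)]; ring
  have key : ∀ t ∈ Icc (0:ℝ) T, φ t ≤ gronwallBound (‖X 0‖ ^ 2) K (f₀ ^ 2) (t - 0) := by
    apply le_gronwallBound_of_liminf_deriv_right_le
    · exact fun t ht => ((hφderiv t ht).continuousAt).continuousWithinAt
    · intro x hx r hr
      have hx' : x ∈ Icc (0:ℝ) T := ⟨hx.1, hx.2.le⟩
      have := ((hφderiv x hx').hasDerivWithinAt (s := Ici x)).liminf_right_slope_le hr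
      refine this.mono fun z hz => ?_
      rwa [slope_def_field, div_eq_inv_mul] at hz
    · simp [hφdef]
    · intro t ht
      have ht' : t ∈ Icc (0:ℝ) T := ⟨ht.1, ht.2.le⟩
      rw [hφ'def]; simp only [dif_pos ht']
      set x := X t with hxdef
      have hAx : ⟪A ⟨x, hXD t ht'⟩, x⟫ ≤ -a * ‖x‖ ^ 2 := hA ⟨x, hXD t ht'⟩
      have hgx : ⟪g t x - g t 0, x - 0⟫ ≤ d * ‖x - 0‖ ^ 2 := hg t ht' x 0
      rw [sub_zero] at hgx
      have hg0x : ⟪g t 0, x⟫ ≤ f₀ * ‖x‖ := by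
        calc ⟪g t 0, x⟫ ≤ ‖g t 0‖ * ‖x‖ := real_inner_le_norm _ _
          _ ≤ f₀ * ‖x‖ := mul_le_mul_of_nonneg_right (hg0 t ht') (norm_nonneg _)
      have hsplit : ⟪g t x, x⟫ = ⟪g t x - g t 0, x⟫ + ⟪g t 0, x⟫ := by
        rw [← inner_add_left, sub_add_cancel]
      have hgtot : ⟪g t x, x⟫ ≤ d * ‖x‖ ^ 2 + f₀ * ‖x‖ := by
        rw [hsplit]; exact add_le_add hgx hg0x
      have hinner : ⟪A ⟨x, hXD t ht'⟩ + g t x, x⟫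
          = ⟪A ⟨x, hXD t ht'⟩, x⟫ + ⟪g t x, x⟫ := inner_add_left _ _ _
      have hAM : f₀ * ‖x‖ ≤ (f₀ ^ 2 + ‖x‖ ^ 2) / 2 := by nlinarith [sq_nonneg (f₀ - ‖x‖)]
      have hle : (1 + 2 * d - 2 * a) ≤ K := le_abs_self _
      have hxsq : 0 ≤ ‖x‖ ^ 2 := sq_nonneg _
      have : 2 * ⟪A ⟨x, hXD t ht'⟩ + g t x, x⟫ ≤ (1 + 2 * d - 2 * a) * ‖x‖ ^ 2 + f₀ ^ 2 := by
        rw [hinner]; nlinarith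
      calc 2 * ⟪A ⟨x, hXD t ht'⟩ + g t x, x⟫
          ≤ (1 + 2 * d - 2 * a) * ‖x‖ ^ 2 + f₀ ^ 2 := this
        _ ≤ K * ‖x‖ ^ 2 + f₀ ^ 2 := by nlinarith
        _ = K * φ t + f₀ ^ 2 := rfl
  intro t ht
  have h1 := key t ht
  have h2 : gronwallBound (‖X 0‖ ^ 2) K (f₀ ^ 2) (t - 0)
      ≤ Real.exp (K * T) * (‖X 0‖ ^ 2 + f₀ ^ 2 * T) := by
    apply gronwallBound_le_aux (sq_nonneg _) hK (sq_nonneg _) <;> simp [ht.1, ht.2]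
  exact h1.trans h2
end

section
/- Let H be a real Hilbert space, E a finite nonempty set, N ≥ 2 an integer, c : E → ℝ with 0 ≤ c(e) ≤ c₊, v : E → ℝ with |v(e)| ≤ v₊, and φ₁,…,φ_{N−1} ∈ H with ‖φᵢ‖ ≤ √(2N) for each i. Let ν : ℝ → (E → ℝ) be a family of probability vectors with 0 ≤ ν(ζ)(e) ≤ μ₊ for all ζ ∈ ℝ and e ∈ E. Define, for x ∈ H and y ∈ E^{N−1}, F^N(x, y) = (1/N)·Σ_{i=1}^{N−1} c(y(i))·(v(y(i)) − ⟨x, φᵢ⟩)·φᵢ and F̄^N(x) = (1/N)·Σ_{i=1}^{N−1} Σ_{e∈E} ν(⟨x,φᵢ⟩)(e)·c(e)·(v(e) − ⟨x, φᵢ⟩)·φᵢ. Then for every C > 0, every y ∈ E^{N−1}, and all x, z ∈ H with ‖x‖ ≤ C and ‖z‖ ≤ C: |⟨F^N(x, y) − F̄^N(x), x − z⟩| ≤ c₊·(v₊ + C·√(2N))·(1 + μ₊)·|E|·2C·√(2N). -/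
open RealInnerProductSpace Finset

noncomputable def reactionTerm {H : Type*} [NormedAddCommGroup H] [InnerProductSpace ℝ H]
    {E : Type*} [Fintype E] (N : ℕ) (c v : E → ℝ) (φ : Fin (N - 1) → H)
    (x : H) (y : Fin (N - 1) → E) : H :=
  (1 / (N : ℝ)) • ∑ i, (c (y i) * (v (y i) - ⟪x, φ i⟫)) • φ i

noncomputable def averagedReactionTerm {H : Type*} [NormedAddCommGroup H]
    [InnerProductSpace ℝ H] {E : Type*} [Fintype E] (N : ℕ) (c v : E → ℝ)
    (φ : Fin (N - 1) → H) (ν : ℝ → E → ℝ) (x : H) : H :=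
  (1 / (N : ℝ)) • ∑ i, ∑ e, (ν ⟪x, φ i⟫ e * c e * (v e - ⟪x, φ i⟫)) • φ i

theorem Phi_bound_O_N
    {H : Type*} [NormedAddCommGroup H] [InnerProductSpace ℝ H] [CompleteSpace H]
    {E : Type*} [Fintype E] [Nonempty E]
    (N : ℕ) (hN : 2 ≤ N)
    (c : E → ℝ) (cpos : ℝ) (hc : ∀ e, 0 ≤ c e ∧ c e ≤ cpos)
    (v : E → ℝ) (vpos : ℝ) (hv : ∀ e, |v e| ≤ vpos)
    (φ : Fin (N - 1) → H) (hφ : ∀ i, ‖φ i‖ ≤ Real.sqrt (2 * N))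
    (ν : ℝ → E → ℝ) (mupos : ℝ)
    (hν : ∀ (ζ : ℝ) (e : E), 0 ≤ ν ζ e ∧ ν ζ e ≤ mupos)
    (hνprob : ∀ ζ : ℝ, ∑ e, ν ζ e = 1)
    (C : ℝ) (hC : 0 < C)
    (y : Fin (N - 1) → E) (x z : H) (hx : ‖x‖ ≤ C) (hz : ‖z‖ ≤ C) :
    |⟪reactionTerm N c v φ x y - averagedReactionTerm N c v φ ν x, x - z⟫|
      ≤ cpos * (vpos + C * Real.sqrt (2 * N)) * (1 + mupos) * (Fintype.card E) * (2 * C)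
        * Real.sqrt (2 * N) := by
  classical
  have hNpos : (0:ℝ) < N := by positivity
  have hsq : (0:ℝ) ≤ Real.sqrt (2 * N) := Real.sqrt_nonneg _
  obtain ⟨e0⟩ := ‹Nonempty E›
  have hcpos : 0 ≤ cpos := le_trans (hc e0).1 (hc e0).2
  have hvpos : 0 ≤ vpos := le_trans (abs_nonneg _) (hv e0)
  have hmupos : 0 ≤ mupos := le_trans (hν 0 e0).1 (hν 0 e0).2
  -- rewrite the difference
  have key : reactionTerm N c v φ x y - averagedReactionTerm N c v φ ν x
      = (1 / (N : ℝ)) • ∑ i, ∑ e,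
          (((if y i = e then (1:ℝ) else 0) - ν ⟪x, φ i⟫ e) * c e * (v e - ⟪x, φ i⟫)) • φ i := by
    unfold reactionTerm averagedReactionTerm
    rw [← smul_sub, ← Finset.sum_sub_distrib]
    congr 1
    refine Finset.sum_congr rfl fun i _ => ?_
    have h1 : (c (y i) * (v (y i) - ⟪x, φ i⟫)) • φ i
        = ∑ e, ((if y i = e then (1:ℝ) else 0) * c e * (v e - ⟪x, φ i⟫)) • φ i := by
      rw [Finset.sum_eq_single (y i)]
      · simp
      · intro b _ hb; simp [Ne.symm hb]
      · intro h; exact absurd (Finset.mem_univ _) h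
    rw [h1, ← Finset.sum_sub_distrib]
    refine Finset.sum_congr rfl fun e _ => ?_
    rw [← sub_smul]
    ring_nf
  rw [key, real_inner_smul_left, sum_inner, abs_mul]
  set B : ℝ := (1 + mupos) * (cpos * ((vpos + C * Real.sqrt (2 * N)) * (Real.sqrt (2 * N) * (2 * C)))) with hB
  have hBnn : 0 ≤ B := by positivity
  have hxz : ‖x - z‖ ≤ 2 * C := by
    calc ‖x - z‖ ≤ ‖x‖ + ‖z‖ := norm_sub_le x z
    _ ≤ 2 * C := by linarith
  have hterm : ∀ i : Fin (N - 1),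
      |⟪∑ e, (((if y i = e then (1:ℝ) else 0) - ν ⟪x, φ i⟫ e) * c e * (v e - ⟪x, φ i⟫)) • φ i, x - z⟫|
        ≤ (Fintype.card E) * B := by
    intro i
    rw [sum_inner]
    refine le_trans (Finset.abs_sum_le_sum_abs _ _) ?_
    have : ∀ e : E, |⟪(((if y i = e then (1:ℝ) else 0) - ν ⟪x, φ i⟫ e) * c e * (v e - ⟪x, φ i⟫)) • φ i, x - z⟫| ≤ B := by
      intro e
      rw [real_inner_smul_left, abs_mul, abs_mul, abs_mul]
      have h1 : |(if y i = e then (1:ℝ) else 0) - ν ⟪x, φ i⟫ e| ≤ 1 + mupos := by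
        refine le_trans (abs_sub _ _) ?_
        gcongr
        · split <;> simp
        · rw [abs_of_nonneg (hν _ e).1]; exact (hν _ e).2
      have h2 : |c e| ≤ cpos := by rw [abs_of_nonneg (hc e).1]; exact (hc e).2
      have hinner : |⟪x, φ i⟫| ≤ C * Real.sqrt (2 * N) := by
        refine le_trans (abs_real_inner_le_norm x (φ i)) ?_
        exact mul_le_mul hx (hφ i) (norm_nonneg _) hC.le
      have h3 : |v e - ⟪x, φ i⟫| ≤ vpos + C * Real.sqrt (2 * N) := by
        refine le_trans (abs_sub _ _) ?_
        exact add_le_add (hv e) hinner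
      have h4 : |⟪φ i, x - z⟫| ≤ Real.sqrt (2 * N) * (2 * C) := by
        refine le_trans (abs_real_inner_le_norm _ _) ?_
        exact mul_le_mul (hφ i) hxz (norm_nonneg _) hsq
      calc |(if y i = e then (1:ℝ) else 0) - ν ⟪x, φ i⟫ e| * |c e| * |v e - ⟪x, φ i⟫| * |⟪φ i, x - z⟫|
          ≤ (1 + mupos) * cpos * (vpos + C * Real.sqrt (2 * N)) * (Real.sqrt (2 * N) * (2 * C)) := by
            gcongr <;> positivity
        _ = B := by rw [hB]; ring
    calc ∑ e, |⟪(((if y i = e then (1:ℝ) else 0) - ν ⟪x, φ i⟫ e) * c e * (v e - ⟪x, φ i⟫)) • φ i, x - z⟫|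
        ≤ ∑ _e : E, B := Finset.sum_le_sum fun e _ => this e
      _ = (Fintype.card E) * B := by rw [Finset.sum_const, nsmul_eq_mul, Finset.card_univ]
  have hsum : |∑ i, ⟪∑ e, (((if y i = e then (1:ℝ) else 0) - ν ⟪x, φ i⟫ e) * c e * (v e - ⟪x, φ i⟫)) • φ i, x - z⟫|
      ≤ (N : ℝ) * ((Fintype.card E) * B) := by
    refine le_trans (Finset.abs_sum_le_sum_abs _ _) ?_
    refine le_trans (Finset.sum_le_sum fun i _ => hterm i) ?_
    rw [Finset.sum_const, nsmul_eq_mul, Finset.card_univ, Fintype.card_fin]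
    have hle : ((N - 1 : ℕ) : ℝ) ≤ (N : ℝ) := by exact_mod_cast Nat.sub_le N 1
    have hEB : (0:ℝ) ≤ (Fintype.card E : ℝ) * B := by positivity
    exact mul_le_mul_of_nonneg_right hle hEB
  have h1N : |1 / (N : ℝ)| = 1 / (N : ℝ) := abs_of_pos (by positivity)
  rw [h1N]
  calc 1 / (N : ℝ) * |∑ i, ⟪∑ e, (((if y i = e then (1:ℝ) else 0) - ν ⟪x, φ i⟫ e) * c e * (v e - ⟪x, φ i⟫)) • φ i, x - z⟫|
      ≤ 1 / (N : ℝ) * ((N : ℝ) * ((Fintype.card E) * B)) := by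
        exact mul_le_mul_of_nonneg_left hsum (by positivity)
    _ = (Fintype.card E) * B := by field_simp
    _ = cpos * (vpos + C * Real.sqrt (2 * N)) * (1 + mupos) * (Fintype.card E) * (2 * C) * Real.sqrt (2 * N) := by
        rw [hB]; ring
end

section
/- Let H be a real Hilbert space, E a finite nonempty set, N ≥ 2 an integer, c : E → ℝ, v : E → ℝ, and φ₁,…,φ_{N−1} ∈ H. Let ν : ℝ → (E → ℝ) be such that for each e ∈ E the map ζ ↦ ν(ζ)(e) is differentiable with derivative ν'(ζ)(e). Fix y ∈ E^{N−1} and z ∈ H, and define Φ(x) = ⟨F^N(x, y) − F̄^N(x), x − z⟩ where F^N(x, y) = (1/N)·Σ_{i=1}^{N−1} c(y(i))·(v(y(i)) − ⟨x, φᵢ⟩)·φᵢ and F̄^N(x) = (1/N)·Σ_{i=1}^{N−1} Σ_{e∈E} ν(⟨x,φᵢ⟩)(e)·c(e)·(v(e) − ⟨x, φᵢ⟩)·φᵢ. Then Φ is Fréchet differentiable at every x ∈ H, and its derivative is the continuous linear functional h ↦ ⟨D(x), h⟩, where D(x) = −(1/N)·Σ_{i=1}^{N−1} Σ_{e∈E}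 c(e)·(1_{{e}}(y(i)) − ν(⟨x,φᵢ⟩)(e))·⟨φᵢ, x − z⟩·φᵢ − (1/N)·Σ_{i=1}^{N−1} Σ_{e∈E} c(e)·(v(e) − ⟨x,φᵢ⟩)·ν'(⟨x,φᵢ⟩)(e)·⟨φᵢ, x − z⟩·φᵢ + (1/N)·Σ_{i=1}^{N−1} Σ_{e∈E} c(e)·(v(e) − ⟨x,φᵢ⟩)·(1_{{e}}(y(i)) − ν(⟨x,φᵢ⟩)(e))·φᵢ, and 1_{{e}}(y(i)) equals 1 if y(i) = e and 0 otherwise. -/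
open RealInnerProductSpace Finset

/-- The representation `D(x)` in `H` of the Fréchet derivative of
`x ↦ ⟨F^N(x,y) − F̄^N(x), x − z⟩`. -/
noncomputable def derivRepresentation {H : Type*} [NormedAddCommGroup H]
    [InnerProductSpace ℝ H] {E : Type*} [Fintype E] [DecidableEq E]
    (N : ℕ) (c v : E → ℝ) (φ : Fin (N - 1) → H) (ν ν' : ℝ → E → ℝ)
    (y : Fin (N - 1) → E) (z x : H) : H :=
  -((1 / (N : ℝ)) • ∑ i, ∑ e,
      (c e * ((if y i = e then (1:ℝ) else 0) - ν ⟪x, φ i⟫ e) * ⟪φ i, x - z⟫) • φ i)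
  - (1 / (N : ℝ)) • ∑ i, ∑ e,
      (c e * (v e - ⟪x, φ i⟫) * ν' ⟪x, φ i⟫ e * ⟪φ i, x - z⟫) • φ i
  + (1 / (N : ℝ)) • ∑ i, ∑ e,
      (c e * (v e - ⟪x, φ i⟫) * ((if y i = e then (1:ℝ) else 0) - ν ⟪x, φ i⟫ e)) • φ i

theorem Phi_frechet_differentiable
    {H : Type*} [NormedAddCommGroup H] [InnerProductSpace ℝ H] [CompleteSpace H]
    {E : Type*} [Fintype E] [Nonempty E] [DecidableEq E]
    (N : ℕ) (hN : 2 ≤ N)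
    (c v : E → ℝ) (φ : Fin (N - 1) → H)
    (ν ν' : ℝ → E → ℝ)
    (hν : ∀ (e : E) (ζ : ℝ), HasDerivAt (fun ζ' => ν ζ' e) (ν' ζ e) ζ)
    (y : Fin (N - 1) → E) (z : H) (x : H) :
    HasFDerivAt
      (fun x' : H =>
        ⟪reactionTerm N c v φ x' y - averagedReactionTerm N c v φ ν x', x' - z⟫)
      (innerSL ℝ (derivRepresentation N c v φ ν ν' y z x)) x := by
  classical
  -- notation
  set χ : Fin (N - 1) → E → ℝ := fun i e => if y i = e then (1:ℝ) else 0 with hχ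
  -- the vectors representing each summand of the derivative
  set w : Fin (N - 1) → E → H := fun i e =>
    ((1 / (N : ℝ)) *
      (-(c e * (χ i e - ν ⟪x, φ i⟫ e) * ⟪φ i, x - z⟫)
        - c e * (v e - ⟪x, φ i⟫) * ν' ⟪x, φ i⟫ e * ⟪φ i, x - z⟫
        + c e * (v e - ⟪x, φ i⟫) * (χ i e - ν ⟪x, φ i⟫ e))) • φ i with hw
  -- Rewrite Φ as a double sum of scalar functions
  have hrepr : (fun x' : H =>
      ⟪reactionTerm N c v φ x' y - averagedReactionTerm N c v φ ν x', x' - z⟫)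
      = fun x' : H => ∑ i, ∑ e, (1 / (N : ℝ)) *
        (c e * (χ i e - ν ⟪x', φ i⟫ e) * (v e - ⟪x', φ i⟫) * ⟪φ i, x' - z⟫) := by
    funext x'
    rw [reactionTerm, averagedReactionTerm, ← smul_sub, real_inner_smul_left,
      ← Finset.sum_sub_distrib]
    have : ∀ i : Fin (N - 1),
        ⟪(c (y i) * (v (y i) - ⟪x', φ i⟫)) • φ i
          - ∑ e, (ν ⟪x', φ i⟫ e * c e * (v e - ⟪x', φ i⟫)) • φ i, x' - z⟫
        = ∑ e, c e * (χ i e - ν ⟪x', φ i⟫ e) * (v e - ⟪x', φ i⟫) * ⟪φ i, x' - z⟫ := by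
      intro i
      rw [inner_sub_left, sum_inner, real_inner_smul_left]
      have h1 : (∑ e, c e * (χ i e - ν ⟪x', φ i⟫ e) * (v e - ⟪x', φ i⟫) * ⟪φ i, x' - z⟫)
          = ∑ e, ((if y i = e then c e * (v e - ⟪x', φ i⟫) * ⟪φ i, x' - z⟫ else 0)
            - ν ⟪x', φ i⟫ e * c e * (v e - ⟪x', φ i⟫) * ⟪φ i, x' - z⟫) := by
        refine Finset.sum_congr rfl fun e _ => ?_
        simp only [hχ]
        split_ifs <;> ring
      rw [h1, Finset.sum_sub_distrib, Finset.sum_ite_eq]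
      simp only [Finset.mem_univ, if_true, real_inner_smul_left]
    rw [sum_inner]
    simp only [this]
    rw [Finset.mul_sum]
    refine Finset.sum_congr rfl fun i _ => ?_
    rw [Finset.mul_sum]
  rw [hrepr]
  -- derivative of each summand
  have h1 : ∀ i : Fin (N - 1),
      HasFDerivAt (fun x' : H => ⟪x', φ i⟫) (innerSL ℝ (φ i)) x := by
    intro i
    have heq : (fun x' : H => ⟪x', φ i⟫) = ⇑(innerSL ℝ (φ i)) := by
      ext x'
      simp [real_inner_comm x' (φ i)]
    rw [heq]
    exact (innerSL ℝ (φ i)).hasFDerivAt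
  have h2 : ∀ i : Fin (N - 1),
      HasFDerivAt (fun x' : H => ⟪φ i, x' - z⟫) (innerSL ℝ (φ i)) x := by
    intro i
    have := ((innerSL ℝ (φ i)).hasFDerivAt (x := x - z)).comp x
      ((hasFDerivAt_id x).sub_const z)
    exact this
  have key : ∀ (i : Fin (N - 1)) (e : E),
      HasFDerivAt (fun x' : H => (1 / (N : ℝ)) *
        (c e * (χ i e - ν ⟪x', φ i⟫ e) * (v e - ⟪x', φ i⟫) * ⟪φ i, x' - z⟫))
        (innerSL ℝ (w i e)) x := by
    intro i e
    have h3 : HasFDerivAt (fun x' : H => ν ⟪x', φ i⟫ e)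
        (ν' ⟪x, φ i⟫ e • innerSL ℝ (φ i)) x :=
      by have := (hν e ⟪x, φ i⟫).comp_hasFDerivAt x (h1 i); exact this
    have hA : HasFDerivAt (fun x' : H => c e * (χ i e - ν ⟪x', φ i⟫ e))
        (c e • (0 - ν' ⟪x, φ i⟫ e • innerSL ℝ (φ i))) x :=
      ((hasFDerivAt_const (χ i e) x).sub h3).const_mul (c e)
    have hB : HasFDerivAt (fun x' : H => v e - ⟪x', φ i⟫)
        (0 - innerSL ℝ (φ i)) x := (hasFDerivAt_const (v e) x).sub (h1 i)
    have hprod := ((hA.mul hB).mul (h2 i)).const_mul (1 / (N : ℝ))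
    refine hprod.congr_fderiv ?_
    ext h
    simp only [hw, ContinuousLinearMap.coe_smul', Pi.smul_apply,
      ContinuousLinearMap.add_apply, ContinuousLinearMap.smul_apply,
      ContinuousLinearMap.sub_apply, ContinuousLinearMap.zero_apply,
      innerSL_apply_apply, real_inner_smul_left, smul_eq_mul, Pi.mul_apply]
    ring
  -- sum the derivatives
  have hsum : HasFDerivAt (fun x' : H => ∑ i, ∑ e, (1 / (N : ℝ)) *
      (c e * (χ i e - ν ⟪x', φ i⟫ e) * (v e - ⟪x', φ i⟫) * ⟪φ i, x' - z⟫))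
      (∑ i, ∑ e, innerSL ℝ (w i e)) x :=
    HasFDerivAt.fun_sum fun i _ => HasFDerivAt.fun_sum fun e _ => key i e
  refine hsum.congr_fderiv ?_
  have : (∑ i, ∑ e, innerSL ℝ (w i e)) = innerSL ℝ (∑ i, ∑ e, w i e) := by
    simp only [map_sum]
  rw [this]
  congr 1
  -- finally, the algebraic identity ∑∑ w = derivRepresentation
  rw [derivRepresentation]
  simp only [hw, ← hχ, mul_smul, ← Finset.smul_sum, add_smul, sub_smul, neg_smul,
    Finset.sum_add_distrib, Finset.sum_sub_distrib, smul_add, smul_sub, smul_neg,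
    Finset.sum_neg_distrib]
  rfl
end
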